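/- Structure of optimal solutions in the strict case A (delegate as much as possible): assume 0 < γ < 1/β, β > 0, Y ≥ 0, Z ≥ 0, and X̃' = X̃. Then every feasible pair (x, y) of the simplified MUST-M problem attaining the minimum objective value satisfies: y_v ≤ β·x̃_v for all v ∈ V, x_v = x̃_v − (1/β)·y_v for all v ∈ V, and ∑_v y_v = min(Y, Z/γ, β·X̃). -/

import Mathlib

open Finset

/-- Feasibility for the simplified MUST-M problem. -/
def Feasible {V : Type*} [Fintype V] (xt : V → ℝ) (β γ X' Y Z : ℝ)
    (x y : V → ℝ) : Prop :=
  (∀ v, 0 ≤ x v) ∧ (∀ v, 0 ≤ y v) ∧ (∀ v, xt v ≤ x v + (1 / β) * y v) ∧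
  (∑ v, (x v + γ * y v)) ≤ X' ∧ (∑ v, y v) ≤ Y ∧ (∑ v, γ * y v) ≤ Z

set_option maxHeartbeats 1000000

/-- Structure of optimal solutions in the strict case A (`0 < γ < 1/β`) with
`X̃' = X̃`: the user delegates as much as possible to the avatar. -/
theorem mustm_strict_caseA_optimal_structure {V : Type*} [Fintype V]
    (xt : V → ℝ) (β γ Y Z : ℝ)
    (hxt : ∀ v, 0 ≤ xt v) (hβ : 0 < β) (hγ : 0 < γ) (hγβ : γ < 1 / β)
    (hY : 0 ≤ Y) (hZ : 0 ≤ Z)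
    (x y : V → ℝ) (hfeas : Feasible xt β γ (∑ v, xt v) Y Z x y)
    (hopt : ∀ x' y' : V → ℝ, Feasible xt β γ (∑ v, xt v) Y Z x' y' →
      (∑ v, (x v + γ * y v)) ≤ ∑ v, (x' v + γ * y' v)) :
    (∀ v, y v ≤ β * xt v) ∧
    (∀ v, x v = xt v - (1 / β) * y v) ∧
    (∑ v, y v) = min Y (min (Z / γ) (β * ∑ v, xt v)) := by
  obtain ⟨hx0, hy0, hcon, hSle, hTY, hTZ⟩ := hfeas
  set X : ℝ := ∑ v, xt v with hXdef
  have hX0 : 0 ≤ X := Finset.sum_nonneg fun v _ => hxt v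
  have hc : 0 < 1 / β - γ := by linarith
  set c : ℝ := 1 / β - γ with hcdef
  set M : ℝ := min Y (min (Z / γ) (β * X)) with hMdef
  have hZγ : 0 ≤ Z / γ := div_nonneg hZ hγ.le
  have hM0 : 0 ≤ M := le_min hY (le_min hZγ (by positivity))
  have hMβX : M ≤ β * X := (min_le_right _ _).trans (min_le_right _ _)
  have hMY : M ≤ Y := min_le_left _ _
  have hMZ : M ≤ Z / γ := (min_le_right _ _).trans (min_le_left _ _)
  have hγMZ : γ * M ≤ Z := by
    rw [le_div_iff₀ hγ] at hMZ; linarith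
  -- upper bound on the optimal value via a candidate solution
  have hupper : (∑ v, (x v + γ * y v)) ≤ X - c * M := by
    rcases eq_or_lt_of_le hX0 with hX0' | hXpos
    · -- X = 0 : all xt v = 0, take x' = y' = 0
      have hxt0 : ∀ v ∈ Finset.univ, xt v = 0 := by
        rw [← Finset.sum_eq_zero_iff_of_nonneg (fun v _ => hxt v)]
        exact hX0'.symm
      have hMz : M = 0 := le_antisymm (by nlinarith) hM0
      have hfe : Feasible xt β γ X Y Z (fun _ => 0) (fun _ => 0) := by
        refine ⟨fun v => le_refl 0, fun v => le_refl 0, fun v => ?_, ?_, ?_, ?_⟩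
        · simp [hxt0 v (Finset.mem_univ v)]
        · simp [← hX0']
        · simpa using hY
        · simpa using hZ
      have := hopt _ _ hfe
      simpa [hMz, ← hX0'] using this
    · -- X > 0 : proportional candidate
      set y' : V → ℝ := fun v => M * xt v / X with hy'
      set x' : V → ℝ := fun v => xt v - (1 / β) * y' v with hx'
      have hy'0 : ∀ v, 0 ≤ y' v := fun v =>
        div_nonneg (mul_nonneg hM0 (hxt v)) hXpos.le
      have hy'le : ∀ v, y' v ≤ β * xt v := by
        intro v
        simp only [hy', div_le_iff₀ hXpos]
        nlinarith [hxt v]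
      have hx'0 : ∀ v, 0 ≤ x' v := by
        intro v
        have := hy'le v
        simp only [hx']
        rw [sub_nonneg, one_div]
        rw [inv_mul_le_iff₀ hβ]
        linarith
      have hsy' : ∑ v, y' v = M := by
        simp only [hy', div_eq_mul_inv, mul_assoc]
        rw [← Finset.mul_sum, ← Finset.sum_mul]
        field_simp
        rw [← hXdef]
      have hobj : ∑ v, (x' v + γ * y' v) = X - c * M := by
        have : ∀ v, x' v + γ * y' v = xt v - c * y' v := by
          intro v; simp only [hx', hcdef]; ring
        rw [Finset.sum_congr rfl fun v _ => this v]
        rw [Finset.sum_sub_distrib, ← Finset.mul_sum, hsy']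
      have hfe : Feasible xt β γ X Y Z x' y' := by
        refine ⟨hx'0, hy'0, fun v => ?_, ?_, ?_, ?_⟩
        · simp [hx']
        · rw [hobj]; nlinarith
        · rw [hsy']; exact hMY
        · rw [← Finset.mul_sum, hsy']; exact hγMZ
      have := hopt _ _ hfe
      rwa [hobj] at this
  -- pointwise lower bound 1 : x v + γ y v ≥ xt v - c * y v
  have hlow1 : ∀ v, xt v - c * y v ≤ x v + γ * y v := by
    intro v
    have := hcon v
    simp only [hcdef]
    linarith
  -- pointwise lower bound 2 : x v + γ y v ≥ γ β xt v
  have hlow2 : ∀ v, γ * β * xt v ≤ x v + γ * y v := by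
    intro v
    rcases le_or_gt (y v) (β * xt v) with h | h
    · have h1 := hlow1 v
      have : c * y v ≤ c * (β * xt v) := by nlinarith
      have hβc : xt v - c * (β * xt v) = γ * β * xt v := by
        simp only [hcdef]; field_simp; ring
      linarith
    · have := hx0 v
      nlinarith
  -- total identity : S = X - c * T + σ
  have hsum1 : X - c * (∑ v, y v) ≤ ∑ v, (x v + γ * y v) := by
    have : ∀ v ∈ Finset.univ, xt v - c * y v ≤ x v + γ * y v :=
      fun v _ => hlow1 v
    have h := Finset.sum_le_sum this
    rw [Finset.sum_sub_distrib, ← Finset.mul_sum] at h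
    exact h
  have hsum2 : γ * β * X ≤ ∑ v, (x v + γ * y v) := by
    have h := Finset.sum_le_sum (fun v (_ : v ∈ Finset.univ) => hlow2 v)
    rwa [← Finset.mul_sum] at h
  have hTZ' : (∑ v, y v) ≤ Z / γ := by
    rw [le_div_iff₀ hγ, ← Finset.mul_sum] at *
    rw [mul_comm]
    exact hTZ
  clear_value X c M
  -- now the main case split
  rcases le_or_gt (min Y (Z / γ)) (β * X) with hcase | hcase
  · -- M = min Y (Z/γ); forces T = M and σ = 0
    have hMeq : M = min Y (Z / γ) := by
      rw [hMdef, ← min_assoc, min_eq_left hcase]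
    have hTleM : (∑ v, y v) ≤ M := by
      rw [hMeq]; exact le_min hTY hTZ'
    -- S = X - c M exactly
    have hcTM : c * (∑ v, y v) ≤ c * M := mul_le_mul_of_nonneg_left hTleM hc.le
    have hSeq : ∑ v, (x v + γ * y v) = X - c * M := by
      have : X - c * M ≤ ∑ v, (x v + γ * y v) := by linarith [hsum1]
      linarith
    have hTeq : (∑ v, y v) = M := by
      have h1 : c * M ≤ c * (∑ v, y v) := by linarith [hsum1, hSeq]
      have := le_of_mul_le_mul_left h1 hc
      linarith
    -- each slack is zero
    have hslack : ∀ v, x v = xt v - (1 / β) * y v := by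
      have hz : ∑ v, (x v + γ * y v - (xt v - c * y v)) = 0 := by
        have e1 : ∑ v, (x v + γ * y v - (xt v - c * y v))
            = (∑ v, (x v + γ * y v)) - ((∑ v, xt v) - c * (∑ v, y v)) := by
          rw [Finset.sum_sub_distrib]
          congr 1
          rw [Finset.sum_sub_distrib, Finset.mul_sum]
        rw [e1, hSeq, hTeq, ← hXdef]
        ring
      have := (Finset.sum_eq_zero_iff_of_nonneg
        (fun v (_ : v ∈ Finset.univ) => sub_nonneg.mpr (hlow1 v))).mp hz
      intro v
      have h := this v (Finset.mem_univ v)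
      have : x v + γ * y v = xt v - c * y v := by linarith [sub_eq_zero.mp h]
      simp only [hcdef] at this
      linarith
    refine ⟨fun v => ?_, hslack, hTeq⟩
    have h1 := hx0 v
    rw [hslack v] at h1
    rw [sub_nonneg, one_div, inv_mul_le_iff₀ hβ] at h1
    linarith [h1]
  · -- M = β X ; forces y v = β xt v pointwise
    have hb1 : β * X ≤ Y := le_trans hcase.le (min_le_left _ _)
    have hb2 : β * X ≤ Z / γ := le_trans hcase.le (min_le_right _ _)
    have hMeq : M = β * X := by
      rw [hMdef, min_eq_right hb2, min_eq_right hb1]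
    have hSeq : ∑ v, (x v + γ * y v) = γ * β * X := by
      have : X - c * M = γ * β * X := by
        rw [hMeq, hcdef]
        field_simp
        ring
      rw [this] at hupper
      linarith [hsum2]
    have hz : ∑ v, (x v + γ * y v - γ * β * xt v) = 0 := by
      rw [Finset.sum_sub_distrib, ← Finset.mul_sum, ← hXdef, hSeq]
      ring
    have hpt := (Finset.sum_eq_zero_iff_of_nonneg
      (fun v (_ : v ∈ Finset.univ) => sub_nonneg.mpr (hlow2 v))).mp hz
    have hcβ : c * β = 1 - γ * β := by
      rw [hcdef, sub_mul, one_div, inv_mul_cancel₀ hβ.ne']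
    have hyeq : ∀ v, y v = β * xt v := by
      intro v
      have h := sub_eq_zero.mp (hpt v (Finset.mem_univ v))
      have h1 := hx0 v
      have h2 := hcon v
      -- y v ≤ β xt v
      have hle' : γ * y v ≤ γ * (β * xt v) := by nlinarith [h, h1]
      have hle : y v ≤ β * xt v := le_of_mul_le_mul_left hle' hγ
      -- y v ≥ β xt v
      have hcy : c * y v = (1 / β) * y v - γ * y v := by rw [hcdef]; ring
      have h4 : c * (β * xt v) ≤ c * y v := by
        have e : c * (β * xt v) = (1 - γ * β) * xt v := by
          rw [← hcβ]; ring
        rw [e]; nlinarith [h2, h, hcy]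
      have hge : β * xt v ≤ y v := le_of_mul_le_mul_left h4 hc
      linarith
    have hxeq : ∀ v, x v = xt v - (1 / β) * y v := by
      intro v
      have h := sub_eq_zero.mp (hpt v (Finset.mem_univ v))
      have hinv : (1 / β) * (β * xt v) = xt v := by field_simp
      have hx00 : x v = 0 := by nlinarith [h, hyeq v]
      rw [hx00, hyeq v, hinv]
      ring
    refine ⟨fun v => (hyeq v).le, hxeq, ?_⟩
    rw [hMeq]
    rw [Finset.sum_congr rfl fun v _ => hyeq v, ← Finset.mul_sum, hXdef]
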